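/- If a Borel subset B of a Polish group G is invariant under conjugation, then B is left Haar null if and only if it is right Haar null if and only if it is Haar null. (Here B is left Haar null if there is a Borel probability measure μ on G with μ(gB)=0 for all g ∈ G, right Haar null if μ(Bg)=0 for all g, and Haar null if μ(gBh)=0 for all g,h.) -/

import Mathlib

open MeasureTheory

variable {G : Type*} [Group G] [TopologicalSpace G] [IsTopologicalGroup G]
  [PolishSpace G] [MeasurableSpace G] [BorelSpace G]

/-- A Borel set `B` is Haar null if there is a Borel probability measure `μ` with
`μ(gBh) = 0` for all `g, h`. -/
def IsHaarNullBorel (B : Set G) : Prop :=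
  ∃ μ : Measure G, IsProbabilityMeasure μ ∧ ∀ g h : G, μ ((fun x => g * x * h) '' B) = 0

/-- A Borel set `B` is left Haar null if there is a Borel probability measure `μ` with
`μ(gB) = 0` for all `g`. -/
def IsLeftHaarNullBorel (B : Set G) : Prop :=
  ∃ μ : Measure G, IsProbabilityMeasure μ ∧ ∀ g : G, μ ((fun x => g * x) '' B) = 0

/-- A Borel set `B` is right Haar null if there is a Borel probability measure `μ` with
`μ(Bg) = 0` for all `g`. -/
def IsRightHaarNullBorel (B : Set G) : Prop :=
  ∃ μ : Measure G, IsProbabilityMeasure μ ∧ ∀ g : G, μ ((fun x => x * g) '' B) = 0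

/-- If a Borel subset of a Polish group is invariant under conjugation, then it is
left Haar null iff it is right Haar null iff it is Haar null. -/
theorem left_iff_right_iff_haarNull_of_conjInvariant (B : Set G)
    (hB : MeasurableSet B) (hconj : ∀ g : G, (fun x => g * x * g⁻¹) '' B = B) :
    (IsLeftHaarNullBorel B ↔ IsRightHaarNullBorel B) ∧
    (IsRightHaarNullBorel B ↔ IsHaarNullBorel B) := by
  have hmem : ∀ g x : G, x ∈ B ↔ g * x * g⁻¹ ∈ B := by
    intro g x
    constructor
    · intro hx
      have h2 : g * x * g⁻¹ ∈ (fun x => g * x * g⁻¹) '' B := ⟨x, hx, rfl⟩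
      rwa [hconj g] at h2
    · intro hx
      have h2 : g⁻¹ * (g * x * g⁻¹) * g⁻¹⁻¹ ∈ (fun y => g⁻¹ * y * g⁻¹⁻¹) '' B :=
        ⟨_, hx, rfl⟩
      rw [hconj g⁻¹] at h2
      have he : g⁻¹ * (g * x * g⁻¹) * g⁻¹⁻¹ = x := by group
      rwa [he] at h2
  have key : ∀ g h : G, (fun x => g * x * h) '' B = (fun x => (g * h) * x) '' B := by
    intro g h
    ext x
    simp only [Set.mem_image]
    constructor
    · rintro ⟨b, hb, rfl⟩
      refine ⟨h⁻¹ * b * h, ?_, by group⟩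
      have := (hmem h⁻¹ b).mp hb
      simpa using this
    · rintro ⟨b, hb, rfl⟩
      exact ⟨h * b * h⁻¹, (hmem h b).mp hb, by group⟩
  have keyL : ∀ g : G, (fun x => g * x) '' B = (fun x => x * g) '' B := by
    intro g
    ext x
    simp only [Set.mem_image]
    constructor
    · rintro ⟨b, hb, rfl⟩
      exact ⟨g * b * g⁻¹, (hmem g b).mp hb, by group⟩
    · rintro ⟨b, hb, rfl⟩
      refine ⟨g⁻¹ * b * g, ?_, by group⟩
      have := (hmem g⁻¹ b).mp hb
      simpa using this
  constructor
  · constructor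
    · rintro ⟨μ, hμ, hnull⟩
      exact ⟨μ, hμ, fun g => by rw [← keyL g]; exact hnull g⟩
    · rintro ⟨μ, hμ, hnull⟩
      exact ⟨μ, hμ, fun g => by rw [keyL g]; exact hnull g⟩
  · constructor
    · rintro ⟨μ, hμ, hnull⟩
      refine ⟨μ, hμ, fun g h => ?_⟩
      rw [key g h, keyL (g * h)]
      exact hnull (g * h)
    · rintro ⟨μ, hμ, hnull⟩
      refine ⟨μ, hμ, fun g => ?_⟩
      have := hnull 1 g
      simpa using this
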